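/- arXiv:0803.1653 — 4 statements merged into one kernel-verified Lean document; each statement's English description precedes it below -/
import Mathlib

section
/- Let k ≥ 1 and let χ : (EuclideanSpace ℝ (Fin k)) × (EuclideanSpace ℝ (Fin k)) → ℝ be twice continuously differentiable, nonnegative, with the operator norm of its second derivative bounded by Ξ > 0 at every point, and such that for all ν, ζ, ξ the second derivative of ζ ↦ χ(ν,ζ) at ζ applied to (ξ,ξ) is at least γ‖ξ‖² for some γ > 0. Then there exists a constant Ξ₂ > 0 such that for all ν, ζ: (γ/4)‖ζ‖² − Ξ₂(1 + ‖ν‖²) ≤ χ(ν,ζ) ≤ Ξ₂(1 + ‖ν‖² + ‖ζ‖²). -/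
open Set

/-- One-dimensional second-order Taylor lower bound. -/
lemma oneDim_taylor_lb (φ φ' φ'' : ℝ → ℝ) (c : ℝ)
    (h1 : ∀ t, HasDerivAt φ (φ' t) t) (h2 : ∀ t, HasDerivAt φ' (φ'' t) t)
    (hc : ∀ t, c ≤ φ'' t) : φ 0 + φ' 0 + c / 2 ≤ φ 1 := by
  set ψ' : ℝ → ℝ := fun t => φ' t - φ' 0 - c * t with hψ'def
  set ψ : ℝ → ℝ := fun t => φ t - φ 0 - t * φ' 0 - c * t ^ 2 / 2 with hψdef
  have hψ'deriv : ∀ t, HasDerivAt ψ' (φ'' t - c) t := by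
    intro t
    have h := ((h2 t).sub_const (φ' 0)).sub ((hasDerivAt_id t).const_mul c)
    simp only [sub_zero, mul_one] at h
    exact h
  have hψderiv : ∀ t, HasDerivAt ψ (ψ' t) t := by
    intro t
    have hsq : HasDerivAt (fun t : ℝ => c * t ^ 2 / 2) (c * t) t := by
      have := ((hasDerivAt_pow 2 t).const_mul c).div_const 2
      exact this.congr_deriv (by norm_num; ring)
    have h := (((h1 t).sub_const (φ 0)).sub ((hasDerivAt_id t).mul_const (φ' 0))).sub hsq
    simp only [sub_zero, one_mul, mul_one] at h
    exact h
  have hψ'mono : Monotone ψ' :=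
    monotone_of_deriv_nonneg (fun t => (hψ'deriv t).differentiableAt)
      (fun t => by rw [(hψ'deriv t).deriv]; linarith [hc t])
  have hψ'0 : ψ' 0 = 0 := by simp [hψ'def]
  have hψmono : MonotoneOn ψ (Ici (0 : ℝ)) := by
    apply monotoneOn_of_deriv_nonneg (convex_Ici 0)
      (fun t _ => (hψderiv t).continuousAt.continuousWithinAt)
      (fun t _ => (hψderiv t).differentiableAt.differentiableWithinAt)
    intro t ht
    rw [(hψderiv t).deriv]
    have : (0 : ℝ) ≤ t := le_of_lt (by simpa using ht)
    have := hψ'mono this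
    rw [hψ'0] at this
    exact this
  have h01 : ψ 0 ≤ ψ 1 := hψmono (self_mem_Ici) (by norm_num) (by norm_num)
  simp only [hψdef] at h01
  nlinarith [h01]

variable {E : Type*} [NormedAddCommGroup E] [NormedSpace ℝ E]

/-- Vector-valued second-order Taylor lower bound along a ray. -/
lemma taylor_lb (g : E → ℝ) (hg : ContDiff ℝ 2 g) (ζ : E) (c : ℝ)
    (hc : ∀ t : ℝ, c ≤ fderiv ℝ (fderiv ℝ g) (t • ζ) ζ ζ) :
    g 0 + fderiv ℝ g 0 ζ + c / 2 ≤ g ζ := by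
  have hdg : Differentiable ℝ g := hg.differentiable two_ne_zero
  have hdg' : Differentiable ℝ (fderiv ℝ g) :=
    (hg.fderiv_right (m := 1) le_rfl).differentiable one_ne_zero
  have hline : ∀ t : ℝ, HasDerivAt (fun s : ℝ => s • ζ) ζ t := fun t => by
    simpa using (hasDerivAt_id t).smul_const ζ
  have h1 : ∀ t : ℝ, HasDerivAt (fun s : ℝ => g (s • ζ)) (fderiv ℝ g (t • ζ) ζ) t := fun t =>
    (hdg (t • ζ)).hasFDerivAt.comp_hasDerivAt t (hline t)
  have h2 : ∀ t : ℝ, HasDerivAt (fun s : ℝ => fderiv ℝ g (s • ζ) ζ)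
      (fderiv ℝ (fderiv ℝ g) (t • ζ) ζ ζ) t := by
    intro t
    have hA : HasDerivAt (fun s : ℝ => fderiv ℝ g (s • ζ))
        (fderiv ℝ (fderiv ℝ g) (t • ζ) ζ) t :=
      (hdg' (t • ζ)).hasFDerivAt.comp_hasDerivAt t (hline t)
    have := (ContinuousLinearMap.apply ℝ ℝ ζ).hasFDerivAt.comp_hasDerivAt t hA
    exact this
  have key := oneDim_taylor_lb (fun s => g (s • ζ)) (fun s => fderiv ℝ g (s • ζ) ζ)
    (fun s => fderiv ℝ (fderiv ℝ g) (s • ζ) ζ ζ) c h1 h2 hc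
  simpa using key

set_option maxHeartbeats 1000000 in
/-- Two-sided quadratic growth of the kinetic co-energy `χ` under the assumptions
(A4) (`χ ∈ C²`, `χ ≥ 0`, uniformly bounded second derivative) and (A5)
(uniform convexity in the second variable). -/
theorem quadratic_growth_kinetic_coenergy
    (k : ℕ) (hk : 1 ≤ k)
    (χ : EuclideanSpace ℝ (Fin k) × EuclideanSpace ℝ (Fin k) → ℝ)
    (hχ : ContDiff ℝ 2 χ)
    (hnonneg : ∀ p, 0 ≤ χ p)
    (Ξ : ℝ) (hΞ : 0 < Ξ)
    (hbound : ∀ p : EuclideanSpace ℝ (Fin k) × EuclideanSpace ℝ (Fin k),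
      ‖iteratedFDeriv ℝ 2 χ p‖ ≤ Ξ)
    (γ : ℝ) (hγ : 0 < γ)
    (hconv : ∀ ν ζ ξ : EuclideanSpace ℝ (Fin k),
      γ * ‖ξ‖ ^ 2 ≤ iteratedFDeriv ℝ 2 (fun z => χ (ν, z)) ζ ![ξ, ξ]) :
    ∃ Ξ₂ : ℝ, 0 < Ξ₂ ∧ ∀ ν ζ : EuclideanSpace ℝ (Fin k),
      γ / 4 * ‖ζ‖ ^ 2 - Ξ₂ * (1 + ‖ν‖ ^ 2) ≤ χ (ν, ζ) ∧
      χ (ν, ζ) ≤ Ξ₂ * (1 + ‖ν‖ ^ 2 + ‖ζ‖ ^ 2) := by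
  set D0 : ℝ := ‖fderiv ℝ χ 0‖ with hD0def
  have hD0 : 0 ≤ D0 := norm_nonneg _
  -- second derivative operator-norm bound
  have hD2 : ∀ x, ‖fderiv ℝ (fderiv ℝ χ) x‖ ≤ Ξ := by
    intro x
    calc ‖fderiv ℝ (fderiv ℝ χ) x‖
        = ‖iteratedFDeriv ℝ 0 (fderiv ℝ (fderiv ℝ χ)) x‖ := by rw [norm_iteratedFDeriv_zero]
      _ = ‖iteratedFDeriv ℝ 1 (fderiv ℝ χ) x‖ := norm_iteratedFDeriv_fderiv
      _ = ‖iteratedFDeriv ℝ 2 χ x‖ := norm_iteratedFDeriv_fderiv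
      _ ≤ Ξ := hbound x
  have hdχ' : Differentiable ℝ (fderiv ℝ χ) :=
    (hχ.fderiv_right (m := 1) le_rfl).differentiable one_ne_zero
  -- Lipschitz bound for the first derivative
  have hLip : ∀ p : EuclideanSpace ℝ (Fin k) × EuclideanSpace ℝ (Fin k), ‖fderiv ℝ χ p‖ ≤ D0 + Ξ * ‖p‖ := by
    intro p
    have h := convex_univ.norm_image_sub_le_of_norm_fderiv_le
      (f := fderiv ℝ χ) (fun x _ => (hdχ' x)) (fun x _ => hD2 x) (mem_univ (0 : EuclideanSpace ℝ (Fin k) × EuclideanSpace ℝ (Fin k)))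
      (mem_univ p)
    simp only [sub_zero] at h
    calc ‖fderiv ℝ χ p‖ ≤ ‖fderiv ℝ χ p - fderiv ℝ χ 0‖ + ‖fderiv ℝ χ 0‖ := by
          simpa using norm_add_le (fderiv ℝ χ p - fderiv ℝ χ 0) (fderiv ℝ χ 0)
      _ ≤ Ξ * ‖p‖ + D0 := by linarith
      _ = D0 + Ξ * ‖p‖ := by ring
  -- Upper bound : χ p ≤ χ 0 + D0 ‖p‖ + Ξ/2 ‖p‖²
  have hupper : ∀ p : EuclideanSpace ℝ (Fin k) × EuclideanSpace ℝ (Fin k), χ p ≤ χ 0 + D0 * ‖p‖ + Ξ / 2 * ‖p‖ ^ 2 := by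
    intro p
    have hc : ∀ t : ℝ, -(Ξ * ‖p‖ ^ 2) ≤ fderiv ℝ (fderiv ℝ (fun x => -χ x)) (t • p) p p := by
      intro t
      have e1 : fderiv ℝ (fun x => -χ x) = fun x => -(fderiv ℝ χ x) := by
        funext x; exact fderiv_neg
      rw [e1]
      have e2 : fderiv ℝ (fun x => -(fderiv ℝ χ x)) (t • p) = -(fderiv ℝ (fderiv ℝ χ) (t • p)) :=
        fderiv_neg
      rw [e2]
      have hb : |fderiv ℝ (fderiv ℝ χ) (t • p) p p| ≤ Ξ * ‖p‖ ^ 2 := by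
        have h1 : ‖fderiv ℝ (fderiv ℝ χ) (t • p) p p‖ ≤
            ‖fderiv ℝ (fderiv ℝ χ) (t • p) p‖ * ‖p‖ :=
          (fderiv ℝ (fderiv ℝ χ) (t • p) p).le_opNorm p
        have h2 : ‖fderiv ℝ (fderiv ℝ χ) (t • p) p‖ ≤
            ‖fderiv ℝ (fderiv ℝ χ) (t • p)‖ * ‖p‖ :=
          (fderiv ℝ (fderiv ℝ χ) (t • p)).le_opNorm p
        have h3 := hD2 (t • p)
        have hp : (0 : ℝ) ≤ ‖p‖ := norm_nonneg _
        calc |fderiv ℝ (fderiv ℝ χ) (t • p) p p| ≤ ‖fderiv ℝ (fderiv ℝ χ) (t • p) p‖ * ‖p‖ := h1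
          _ ≤ (‖fderiv ℝ (fderiv ℝ χ) (t • p)‖ * ‖p‖) * ‖p‖ := by
              exact mul_le_mul_of_nonneg_right h2 hp
          _ ≤ (Ξ * ‖p‖) * ‖p‖ := by
              exact mul_le_mul_of_nonneg_right (mul_le_mul_of_nonneg_right h3 hp) hp
          _ = Ξ * ‖p‖ ^ 2 := by ring
      have := neg_abs_le (fderiv ℝ (fderiv ℝ χ) (t • p) p p)
      simp only [ContinuousLinearMap.neg_apply]
      linarith [abs_le.mp hb]
    have key := taylor_lb (fun x => -χ x) hχ.neg p (-(Ξ * ‖p‖ ^ 2)) hc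
    have e1 : fderiv ℝ (fun x => -χ x) (0 : EuclideanSpace ℝ (Fin k) × EuclideanSpace ℝ (Fin k)) = -(fderiv ℝ χ 0) := fderiv_neg
    rw [e1] at key
    simp only [ContinuousLinearMap.neg_apply] at key
    have hd0p : fderiv ℝ χ 0 p ≤ D0 * ‖p‖ := by
      calc fderiv ℝ χ 0 p ≤ |fderiv ℝ χ 0 p| := le_abs_self _
        _ ≤ ‖fderiv ℝ χ 0‖ * ‖p‖ := (fderiv ℝ χ 0).le_opNorm p
    linarith [key]
  -- the constant
  refine ⟨1 + χ 0 + D0 + Ξ + (2 * D0 ^ 2 + 2 * Ξ ^ 2) / γ, ?_, ?_⟩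
  · have : 0 ≤ (2 * D0 ^ 2 + 2 * Ξ ^ 2) / γ := by positivity
    have := hnonneg 0
    linarith
  intro ν ζ
  set Ξ₂ : ℝ := 1 + χ 0 + D0 + Ξ + (2 * D0 ^ 2 + 2 * Ξ ^ 2) / γ with hΞ₂def
  clear_value Ξ₂
  have hE : γ * ((2 * D0 ^ 2 + 2 * Ξ ^ 2) / γ) = 2 * D0 ^ 2 + 2 * Ξ ^ 2 :=
    mul_div_cancel₀ _ hγ.ne'
  have hnν : (0:ℝ) ≤ ‖ν‖ := norm_nonneg _
  have hnζ : (0:ℝ) ≤ ‖ζ‖ := norm_nonneg _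
  constructor
  · -- lower bound
    set g : EuclideanSpace ℝ (Fin k) → ℝ := fun z => χ (ν, z) with hgdef
    have hg : ContDiff ℝ 2 g := hχ.comp (contDiff_const.prodMk contDiff_id)
    have hc : ∀ t : ℝ, γ * ‖ζ‖ ^ 2 ≤ fderiv ℝ (fderiv ℝ g) (t • ζ) ζ ζ := by
      intro t
      have h := hconv ν (t • ζ) ζ
      rwa [iteratedFDeriv_two_apply, Matrix.cons_val_zero, Matrix.cons_val_one,
        Matrix.cons_val_zero] at h
    have key := taylor_lb g hg ζ (γ * ‖ζ‖ ^ 2) hc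
    -- bound the linear term
    have hfg0 : fderiv ℝ g 0 = (fderiv ℝ χ (ν, 0)).comp (ContinuousLinearMap.inr ℝ (EuclideanSpace ℝ (Fin k)) (EuclideanSpace ℝ (Fin k))) := by
      have hline : HasFDerivAt (fun z : EuclideanSpace ℝ (Fin k) => (ν, z)) (ContinuousLinearMap.inr ℝ (EuclideanSpace ℝ (Fin k)) (EuclideanSpace ℝ (Fin k))) 0 :=
        (hasFDerivAt_const ν 0).prodMk (hasFDerivAt_id 0)
      have := ((hχ.differentiable two_ne_zero (ν, 0)).hasFDerivAt.comp 0 hline)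
      exact this.fderiv
    have hnorm0ζ : ‖((0 : EuclideanSpace ℝ (Fin k)), ζ)‖ = ‖ζ‖ := by
      rw [Prod.norm_def]; simp [max_eq_right hnζ]
    have hnormν0 : ‖((ν, (0 : EuclideanSpace ℝ (Fin k))) : EuclideanSpace ℝ (Fin k) × EuclideanSpace ℝ (Fin k))‖ = ‖ν‖ := by
      rw [Prod.norm_def]; simp [max_eq_left hnν]
    have hlin : |fderiv ℝ g 0 ζ| ≤ (D0 + Ξ * ‖ν‖) * ‖ζ‖ := by
      rw [hfg0]
      have h1 : |fderiv ℝ χ (ν, 0) ((0 : EuclideanSpace ℝ (Fin k)), ζ)| ≤ ‖fderiv ℝ χ (ν, 0)‖ * ‖((0 : EuclideanSpace ℝ (Fin k)), ζ)‖ :=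
        (fderiv ℝ χ (ν, 0)).le_opNorm _
      have h2 := hLip (ν, (0 : EuclideanSpace ℝ (Fin k)))
      rw [hnormν0] at h2
      rw [hnorm0ζ] at h1
      have : |fderiv ℝ g 0 ζ| = |fderiv ℝ χ (ν, 0) ((0 : EuclideanSpace ℝ (Fin k)), ζ)| := by rw [hfg0]; rfl
      calc |((fderiv ℝ χ (ν, 0)).comp (ContinuousLinearMap.inr ℝ (EuclideanSpace ℝ (Fin k)) (EuclideanSpace ℝ (Fin k)))) ζ|
          = |fderiv ℝ χ (ν, 0) ((0 : EuclideanSpace ℝ (Fin k)), ζ)| := rfl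
        _ ≤ ‖fderiv ℝ χ (ν, 0)‖ * ‖ζ‖ := h1
        _ ≤ (D0 + Ξ * ‖ν‖) * ‖ζ‖ := mul_le_mul_of_nonneg_right h2 hnζ
    have hg0 : 0 ≤ g 0 := hnonneg (ν, 0)
    -- χ (ν, ζ) ≥ γ/2 ‖ζ‖² - (D0 + Ξ‖ν‖) ‖ζ‖
    have hq : γ / 2 * ‖ζ‖ ^ 2 - (D0 + Ξ * ‖ν‖) * ‖ζ‖ ≤ χ (ν, ζ) := by
      have := abs_le.mp hlin
      have : -((D0 + Ξ * ‖ν‖) * ‖ζ‖) ≤ fderiv ℝ g 0 ζ := this.1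
      have hgζ : g ζ = χ (ν, ζ) := rfl
      rw [hgζ] at key
      linarith [key]
    -- AM-GM step
    have hB2 : (D0 + Ξ * ‖ν‖) ^ 2 ≤ (2 * D0 ^ 2 + 2 * Ξ ^ 2) * (1 + ‖ν‖ ^ 2) := by
      nlinarith [sq_nonneg (D0 * ‖ν‖ - Ξ), sq_nonneg (D0 - Ξ * ‖ν‖), sq_nonneg (D0 * ‖ν‖),
        sq_nonneg (Ξ * ‖ν‖), sq_nonneg D0, sq_nonneg Ξ]
    have hgB : γ * ((D0 + Ξ * ‖ν‖) * ‖ζ‖) ≤ γ * (γ / 4 * ‖ζ‖ ^ 2) + (D0 + Ξ * ‖ν‖) ^ 2 := by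
      nlinarith [sq_nonneg (γ * ‖ζ‖ - 2 * (D0 + Ξ * ‖ν‖))]
    have hnn : (0:ℝ) ≤ 1 + χ 0 + D0 + Ξ := by linarith [hnonneg 0]
    have h1 : 2 * D0 ^ 2 + 2 * Ξ ^ 2 ≤ γ * Ξ₂ := by
      rw [hΞ₂def, mul_add, hE]
      nlinarith [mul_nonneg hγ.le hnn]
    have hγΞ : (2 * D0 ^ 2 + 2 * Ξ ^ 2) * (1 + ‖ν‖ ^ 2) ≤ γ * (Ξ₂ * (1 + ‖ν‖ ^ 2)) := by
      have h2 : (0:ℝ) ≤ 1 + ‖ν‖ ^ 2 := by positivity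
      calc (2 * D0 ^ 2 + 2 * Ξ ^ 2) * (1 + ‖ν‖ ^ 2) ≤ (γ * Ξ₂) * (1 + ‖ν‖ ^ 2) :=
            mul_le_mul_of_nonneg_right h1 h2
        _ = γ * (Ξ₂ * (1 + ‖ν‖ ^ 2)) := by ring
    have hBz : (D0 + Ξ * ‖ν‖) * ‖ζ‖ ≤ γ / 4 * ‖ζ‖ ^ 2 + Ξ₂ * (1 + ‖ν‖ ^ 2) := by
      have h : γ * ((D0 + Ξ * ‖ν‖) * ‖ζ‖) ≤ γ * (γ / 4 * ‖ζ‖ ^ 2 + Ξ₂ * (1 + ‖ν‖ ^ 2)) := by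
        linarith [hgB, hB2, hγΞ]
      exact (mul_le_mul_iff_of_pos_left hγ).mp h
    linarith [hq, hBz]
  · -- upper bound
    have hpnorm : ‖((ν, ζ) : EuclideanSpace ℝ (Fin k) × EuclideanSpace ℝ (Fin k))‖ ≤ ‖ν‖ + ‖ζ‖ := by
      rw [Prod.norm_def]
      exact max_le (by linarith) (by linarith)
    have h := hupper (ν, ζ)
    have hpn : (0:ℝ) ≤ ‖((ν, ζ) : EuclideanSpace ℝ (Fin k) × EuclideanSpace ℝ (Fin k))‖ := norm_nonneg _
    have hsq : ‖((ν, ζ) : EuclideanSpace ℝ (Fin k) × EuclideanSpace ℝ (Fin k))‖ ^ 2 ≤ (‖ν‖ + ‖ζ‖) ^ 2 := by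
      exact pow_le_pow_left₀ hpn hpnorm 2
    have hEnn : (0:ℝ) ≤ (2 * D0 ^ 2 + 2 * Ξ ^ 2) / γ := by positivity
    nlinarith [mul_le_mul_of_nonneg_left hpnorm hD0,
      mul_le_mul_of_nonneg_left hsq (le_of_lt (half_pos hΞ)),
      mul_nonneg hD0 (sq_nonneg (2 * ‖ν‖ - 1)), mul_nonneg hD0 (sq_nonneg (2 * ‖ζ‖ - 1)),
      mul_nonneg hΞ.le (sq_nonneg (‖ν‖ - ‖ζ‖)),
      mul_nonneg (hnonneg 0) (add_nonneg (sq_nonneg ‖ν‖) (sq_nonneg ‖ζ‖)),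
      mul_nonneg hEnn (by positivity : (0:ℝ) ≤ 1 + ‖ν‖ ^ 2 + ‖ζ‖ ^ 2),
      mul_nonneg hnν hnζ, sq_nonneg ‖ν‖, sq_nonneg ‖ζ‖, hnonneg 0]
end

section
/- Let N ≥ 1, let t_0 < t_1 < ... < t_N be real numbers, let ν_i, φ_i ∈ EuclideanSpace ℝ (Fin k) for i = 0,…,N, and set Δ_i = t_i − t_{i-1}, ν̇_i = (ν_i − ν_{i-1})/Δ_i, φ̇_i = (φ_i − φ_{i-1})/Δ_i, and T = max_{1≤i≤N} Δ_i. Then |∑_{i=1}^{N} ⟪ν_i − ν_{i-1}, (φ_i + φ_{i-1})/2⟫ − ∑_{i=1}^{N} ⟪ν_i − ν_{i-1}, φ_{i-1}⟫| = (1/2)|∑_{i=1}^{N} Δ_i² ⟪ν̇_i, φ̇_i⟫| ≤ (T/2)·∑_{i=1}^{N} Δ_i‖ν̇_i‖‖φ̇_i‖. -/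
open scoped RealInnerProductSpace

/-- The difference between the midpoint form of the semi-discretized dissipation and
the fully discretized dissipation is controlled by the maximal time step. -/
theorem dissipation_discretization_error
    (k N : ℕ) (hN : 1 ≤ N) (t : ℕ → ℝ)
    (ht : ∀ i < N, t i < t (i + 1))
    (V P : ℕ → EuclideanSpace ℝ (Fin k))
    (Δ : ℕ → ℝ) (hΔ : ∀ i, Δ i = t i - t (i - 1))
    (νdot φdot : ℕ → EuclideanSpace ℝ (Fin k))
    (hνdot : ∀ i, νdot i = (Δ i)⁻¹ • (V i - V (i - 1)))
    (hφdot : ∀ i, φdot i = (Δ i)⁻¹ • (P i - P (i - 1)))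
    (T : ℝ) (hT : T = (Finset.Icc 1 N).sup' (Finset.nonempty_Icc.2 hN) Δ) :
    |∑ i ∈ Finset.Icc 1 N, ⟪V i - V (i - 1), (2 : ℝ)⁻¹ • (P i + P (i - 1))⟫ -
        ∑ i ∈ Finset.Icc 1 N, ⟪V i - V (i - 1), P (i - 1)⟫| =
      2⁻¹ * |∑ i ∈ Finset.Icc 1 N, (Δ i) ^ 2 * ⟪νdot i, φdot i⟫| ∧
    2⁻¹ * |∑ i ∈ Finset.Icc 1 N, (Δ i) ^ 2 * ⟪νdot i, φdot i⟫| ≤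
      T / 2 * ∑ i ∈ Finset.Icc 1 N, Δ i * ‖νdot i‖ * ‖φdot i‖ := by
  have hΔpos : ∀ i ∈ Finset.Icc 1 N, 0 < Δ i := by
    intro i hi
    obtain ⟨h1, h2⟩ := Finset.mem_Icc.1 hi
    have h := ht (i - 1) (by omega)
    have hi1 : i - 1 + 1 = i := by omega
    rw [hi1] at h
    rw [hΔ]
    linarith
  have key : ∀ i ∈ Finset.Icc 1 N,
      ⟪V i - V (i - 1), (2 : ℝ)⁻¹ • (P i + P (i - 1))⟫ -
        ⟪V i - V (i - 1), P (i - 1)⟫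
        = 2⁻¹ * ((Δ i) ^ 2 * ⟪νdot i, φdot i⟫) := by
    intro i hi
    have hΔ0 := (hΔpos i hi).ne'
    have hV : V i - V (i - 1) = Δ i • νdot i := by
      rw [hνdot, smul_smul, mul_inv_cancel₀ hΔ0, one_smul]
    have hP : P i - P (i - 1) = Δ i • φdot i := by
      rw [hφdot, smul_smul, mul_inv_cancel₀ hΔ0, one_smul]
    have h1 : ⟪V i - V (i - 1), (2 : ℝ)⁻¹ • (P i + P (i - 1))⟫ -
        ⟪V i - V (i - 1), P (i - 1)⟫
        = 2⁻¹ * ⟪V i - V (i - 1), P i - P (i - 1)⟫ := by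
      rw [real_inner_smul_right, inner_add_right, inner_sub_right]
      ring
    rw [h1, hV, hP, real_inner_smul_left, real_inner_smul_right]
    ring
  have hsum : (∑ i ∈ Finset.Icc 1 N,
        ⟪V i - V (i - 1), (2 : ℝ)⁻¹ • (P i + P (i - 1))⟫) -
        ∑ i ∈ Finset.Icc 1 N, ⟪V i - V (i - 1), P (i - 1)⟫
        = 2⁻¹ * ∑ i ∈ Finset.Icc 1 N, (Δ i) ^ 2 * ⟪νdot i, φdot i⟫ := by
    rw [← Finset.sum_sub_distrib, Finset.mul_sum]
    exact Finset.sum_congr rfl key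
  constructor
  · rw [hsum, abs_mul]
    norm_num
  · have hTΔ : ∀ i ∈ Finset.Icc 1 N, Δ i ≤ T := by
      intro i hi
      rw [hT]
      exact Finset.le_sup' Δ hi
    calc 2⁻¹ * |∑ i ∈ Finset.Icc 1 N, (Δ i) ^ 2 * ⟪νdot i, φdot i⟫|
        ≤ 2⁻¹ * ∑ i ∈ Finset.Icc 1 N, |(Δ i) ^ 2 * ⟪νdot i, φdot i⟫| := by
          gcongr
          exact Finset.abs_sum_le_sum_abs _ _
      _ ≤ 2⁻¹ * ∑ i ∈ Finset.Icc 1 N, T * (Δ i * ‖νdot i‖ * ‖φdot i‖) := by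
          gcongr 2⁻¹ * ?_
          apply Finset.sum_le_sum
          intro i hi
          have h1 := abs_real_inner_le_norm (νdot i) (φdot i)
          have h2 := hTΔ i hi
          have h3 := hΔpos i hi
          have h4 : (0 : ℝ) ≤ ‖νdot i‖ := norm_nonneg _
          have h5 : (0 : ℝ) ≤ ‖φdot i‖ := norm_nonneg _
          rw [abs_mul, abs_pow, abs_of_pos h3]
          calc Δ i ^ 2 * |⟪νdot i, φdot i⟫| = Δ i * (Δ i * |⟪νdot i, φdot i⟫|) := by ring
            _ ≤ T * (Δ i * (‖νdot i‖ * ‖φdot i‖)) :=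
                mul_le_mul h2 (mul_le_mul_of_nonneg_left h1 h3.le) (by positivity)
                  (le_trans h3.le h2)
            _ = T * (Δ i * ‖νdot i‖ * ‖φdot i‖) := by ring
      _ = T / 2 * ∑ i ∈ Finset.Icc 1 N, Δ i * ‖νdot i‖ * ‖φdot i‖ := by
          rw [← Finset.mul_sum]; ring
end

section
/- Let t_0 < t_f be real numbers, let 𝒯 be a nonempty finite index set, and for each K ∈ 𝒯 let Θ_K be a finite set of reals with {t_0, t_f} ⊆ Θ_K ⊆ [t_0, t_f] and #Θ_K ≥ 2. Let Θ = ⋃_{K∈𝒯} Θ_K. For a finite set S = {s_0 < s_1 < ... < s_M} ⊆ ℝ with M ≥ 1, write maxgap(S) = max_j (s_{j+1} − s_j) and mingap(S) = min_j (s_{j+1} − s_j). Set h_Θ = maxgap(Θ), T_Θ = max_{K∈𝒯} maxgap(Θ_K), and τ_Θ = T_Θ / (min_{K∈𝒯} mingap(Θ_K)). Then h_Θ ≤ T_Θ ≤ τ_Θ · h_Θ · (#𝒯). -/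
/-- The list of gaps between consecutive elements of a finite set of reals. -/
noncomputable def gapList (S : Finset ℝ) : List ℝ :=
  List.zipWith (fun a b => b - a) (S.sort (· ≤ ·)) (S.sort (· ≤ ·)).tail

/-- The maximal gap between consecutive elements of a finite set of reals. -/
noncomputable def maxgap (S : Finset ℝ) : ℝ :=
  (gapList S).foldr max 0

/-- The minimal gap between consecutive elements of a finite set of reals
(for sets with at least two elements). -/
noncomputable def mingap (S : Finset ℝ) : ℝ :=
  (gapList S).foldr min (maxgap S)


namespace TimeSetAux

lemma le_foldr_max (l : List ℝ) (a : ℝ) : ∀ x ∈ l, x ≤ l.foldr max a := by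
  induction l with
  | nil => simp
  | cons y t ih =>
    intro x hx
    rcases List.mem_cons.mp hx with rfl | hx
    · exact le_max_left _ _
    · exact le_trans (ih x hx) (le_max_right _ _)

lemma init_le_foldr_max (l : List ℝ) (a : ℝ) : a ≤ l.foldr max a := by
  induction l with
  | nil => simp
  | cons y t ih => exact le_trans ih (le_max_right _ _)

lemma foldr_max_le (l : List ℝ) (a b : ℝ) (hab : a ≤ b) (h : ∀ x ∈ l, x ≤ b) :
    l.foldr max a ≤ b := by
  induction l with
  | nil => simpa
  | cons y t ih =>
    exact max_le (h y List.mem_cons_self) (ih fun x hx => h x (List.mem_cons_of_mem _ hx))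

lemma foldr_min_le (l : List ℝ) (a : ℝ) : ∀ x ∈ l, l.foldr min a ≤ x := by
  induction l with
  | nil => simp
  | cons y t ih =>
    intro x hx
    rcases List.mem_cons.mp hx with rfl | hx
    · exact min_le_left _ _
    · exact le_trans (min_le_right _ _) (ih x hx)

lemma foldr_min_le_init (l : List ℝ) (a : ℝ) : l.foldr min a ≤ a := by
  induction l with
  | nil => simp
  | cons y t ih => exact le_trans (min_le_right _ _) ih

lemma foldr_min_pos (l : List ℝ) (a : ℝ) (ha : 0 < a) (h : ∀ x ∈ l, 0 < x) :
    0 < l.foldr min a := by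
  induction l with
  | nil => simpa
  | cons y t ih =>
    exact lt_min (h y List.mem_cons_self) (ih fun x hx => h x (List.mem_cons_of_mem _ hx))

/-- gaps of a list -/
noncomputable def gaps (l : List ℝ) : List ℝ := List.zipWith (fun a b => b - a) l l.tail

lemma gaps_nil : gaps [] = [] := rfl
lemma gaps_single (x : ℝ) : gaps [x] = [] := rfl
lemma gaps_cons (x y : ℝ) (t : List ℝ) : gaps (x :: y :: t) = (y - x) :: gaps (y :: t) := rfl

lemma gaps_sum : ∀ (l : List ℝ) (h : l ≠ []), (gaps l).sum = l.getLast h - l.head h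
  | [x], _ => by simp [gaps_single]
  | x :: y :: t, _ => by
    rw [gaps_cons, List.sum_cons, gaps_sum (y :: t) (by simp),
      List.getLast_cons (by simp : (y :: t) ≠ [])]
    simp only [List.head_cons]
    ring

lemma gaps_length : ∀ (l : List ℝ), (gaps l).length = l.length - 1
  | [] => rfl
  | [x] => rfl
  | x :: y :: t => by
    rw [gaps_cons, List.length_cons, gaps_length (y :: t)]
    simp

lemma mem_gaps : ∀ (l : List ℝ), l.Pairwise (· < ·) → ∀ {x : ℝ}, x ∈ gaps l →
    ∃ a b, a ∈ l ∧ b ∈ l ∧ a < b ∧ x = b - a ∧ ∀ s ∈ l, ¬(a < s ∧ s < b)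
  | [], _, _, hx => by simp [gaps_nil] at hx
  | [y], _, _, hx => by simp [gaps_single] at hx
  | p :: q :: t, hl, x, hx => by
    rw [gaps_cons, List.mem_cons] at hx
    have hpq : p < q := (List.pairwise_cons.mp hl).1 q (by simp)
    rcases hx with rfl | hx
    · refine ⟨p, q, by simp, by simp, hpq, rfl, ?_⟩
      rintro s hs ⟨h1, h2⟩
      rcases List.mem_cons.mp hs with rfl | hs
      · exact absurd h1 (lt_irrefl _)
      rcases List.mem_cons.mp hs with rfl | hs
      · exact absurd h2 (lt_irrefl _)
      · exact absurd h2 (not_lt.mpr (le_of_lt ((List.pairwise_cons.mp (List.pairwise_cons.mp hl).2).1 s hs)))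
    · obtain ⟨a, b, ha, hb, hab, hx, hbet⟩ := mem_gaps (q :: t) (List.pairwise_cons.mp hl).2 hx
      refine ⟨a, b, List.mem_cons_of_mem _ ha, List.mem_cons_of_mem _ hb, hab, hx, ?_⟩
      intro s hs hcon
      rcases List.mem_cons.mp hs with rfl | hs
      · have : s < a := (List.pairwise_cons.mp hl).1 a ha
        exact absurd hcon.1 (not_lt.mpr (le_of_lt this))
      · exact hbet s hs hcon

lemma adjacent_mem_gaps : ∀ (l : List ℝ), l.Pairwise (· < ·) → ∀ {c d : ℝ}, c ∈ l → d ∈ l →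
    c < d → (∀ s ∈ l, ¬(c < s ∧ s < d)) → d - c ∈ gaps l
  | [], _, _, _, hc, _, _, _ => by simp at hc
  | [y], _, c, d, hc, hd, hcd, _ => by
    simp at hc hd; subst hc; subst hd; exact absurd hcd (lt_irrefl _)
  | p :: q :: t, hl, c, d, hc, hd, hcd, hbet => by
    rw [gaps_cons]
    have hsort := List.pairwise_cons.mp hl
    rcases List.mem_cons.mp hc with rfl | hc
    · -- c = p; claim d = q
      have hdq : d = q := by
        rcases List.mem_cons.mp hd with rfl | hd
        · exact absurd hcd (lt_irrefl _)
        rcases List.mem_cons.mp hd with rfl | hd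
        · rfl
        · have hq : c < q := hsort.1 q (by simp)
          have hqd : q < d := (List.pairwise_cons.mp hsort.2).1 d hd
          exact (hbet q (by simp) ⟨hq, hqd⟩).elim
      subst hdq
      exact List.mem_cons_self
    · -- c ∈ q :: t, so d ∈ q :: t too
      have hdm : d ∈ q :: t := by
        rcases List.mem_cons.mp hd with hdp | hd
        · exact absurd (hdp ▸ hcd) (not_lt.mpr (le_of_lt (hsort.1 c hc)))
        · exact hd
      exact List.mem_cons_of_mem _
        (adjacent_mem_gaps (q :: t) hsort.2 hc hdm hcd
          (fun s hs => hbet s (List.mem_cons_of_mem _ hs)))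

end TimeSetAux

namespace TimeSetAux

lemma gapList_def (S : Finset ℝ) : gapList S = gaps (S.sort (· ≤ ·)) := rfl

lemma maxgap_nonneg (S : Finset ℝ) : 0 ≤ maxgap S := init_le_foldr_max _ _

lemma gap_pos (S : Finset ℝ) : ∀ x ∈ gapList S, 0 < x := by
  intro x hx
  rw [gapList_def] at hx
  obtain ⟨a, b, _, _, hab, rfl, _⟩ := mem_gaps _ (S.sortedLT_sort.pairwise) hx
  linarith

lemma gapList_length (S : Finset ℝ) : (gapList S).length = S.card - 1 := by
  rw [gapList_def, gaps_length, Finset.length_sort]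

lemma gapList_ne_nil (S : Finset ℝ) (h2 : 2 ≤ S.card) : gapList S ≠ [] := by
  intro hn
  have := gapList_length S
  rw [hn] at this
  simp at this
  omega

lemma maxgap_pos (S : Finset ℝ) (h2 : 2 ≤ S.card) : 0 < maxgap S := by
  obtain ⟨x, hx⟩ := List.exists_mem_of_ne_nil _ (gapList_ne_nil S h2)
  exact lt_of_lt_of_le (gap_pos S x hx) (le_foldr_max _ _ x hx)

lemma mingap_le_maxgap (S : Finset ℝ) : mingap S ≤ maxgap S := foldr_min_le_init _ _

lemma mingap_pos (S : Finset ℝ) (h2 : 2 ≤ S.card) : 0 < mingap S :=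
  foldr_min_pos _ _ (maxgap_pos S h2) (gap_pos S)

lemma gap_le_maxgap (S : Finset ℝ) : ∀ x ∈ gapList S, x ≤ maxgap S := le_foldr_max _ _

lemma mingap_le_gap (S : Finset ℝ) : ∀ x ∈ gapList S, mingap S ≤ x := foldr_min_le _ _

lemma gapList_sum (S : Finset ℝ) (hS : S.Nonempty) :
    (gapList S).sum = S.max' hS - S.min' hS := by
  have hne : S.sort (· ≤ ·) ≠ [] := by
    simp [← List.length_pos_iff, Finset.length_sort, Finset.card_pos, hS]
  rw [gapList_def, gaps_sum _ hne]
  have hlen : 0 < (S.sort (· ≤ ·)).length := List.length_pos_iff.mpr hne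
  simp only [List.head_eq_getElem, List.getLast_eq_getElem]
  rw [Finset.sorted_zero_eq_min', Finset.sorted_last_eq_max']

end TimeSetAux

namespace TimeSetAux

open scoped Classical

lemma maxgap_le_of_subset {S T : Finset ℝ} (hST : S ⊆ T) {t0 tf : ℝ}
    (h0 : t0 ∈ S) (hf : tf ∈ S) (hT : ∀ x ∈ T, t0 ≤ x ∧ x ≤ tf) :
    maxgap T ≤ maxgap S := by
  apply foldr_max_le _ _ _ (maxgap_nonneg S)
  intro g hg
  rw [gapList_def] at hg
  obtain ⟨a, b, ha, hb, hab, rfl, hbet⟩ := mem_gaps _ T.sortedLT_sort.pairwise hg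
  rw [Finset.mem_sort] at ha hb
  have hF1 : (S.filter (· ≤ a)).Nonempty :=
    ⟨t0, Finset.mem_filter.mpr ⟨h0, (hT a ha).1⟩⟩
  have hF2 : (S.filter (b ≤ ·)).Nonempty :=
    ⟨tf, Finset.mem_filter.mpr ⟨hf, (hT b hb).2⟩⟩
  set c := (S.filter (· ≤ a)).max' hF1 with hc
  set d := (S.filter (b ≤ ·)).min' hF2 with hd
  have hcm := (S.filter (· ≤ a)).max'_mem hF1
  have hdm := (S.filter (b ≤ ·)).min'_mem hF2
  rw [Finset.mem_filter] at hcm hdm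
  have hca : c ≤ a := hcm.2
  have hbd : b ≤ d := hdm.2
  have hcd : c < d := lt_of_le_of_lt hca (lt_of_lt_of_le hab hbd)
  have hadj : d - c ∈ gaps (S.sort (· ≤ ·)) := by
    apply adjacent_mem_gaps _ S.sortedLT_sort.pairwise
      ((Finset.mem_sort _).mpr hcm.1) ((Finset.mem_sort _).mpr hdm.1) hcd
    rintro s hs ⟨h1, h2⟩
    rw [Finset.mem_sort] at hs
    by_cases hsa : s ≤ a
    · have hmem : s ∈ S.filter (· ≤ a) := by
        rw [Finset.mem_filter]; exact ⟨hs, hsa⟩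
      exact absurd (Finset.le_max' _ s hmem) (not_le.mpr h1)
    · push_neg at hsa
      have hsb : b ≤ s := by
        by_contra hsb
        push_neg at hsb
        exact hbet s ((Finset.mem_sort _).mpr (hST hs)) ⟨hsa, hsb⟩
      have hmem : s ∈ S.filter (b ≤ ·) := by
        rw [Finset.mem_filter]; exact ⟨hs, hsb⟩
      exact absurd (Finset.min'_le _ s hmem) (not_le.mpr h2)
  calc b - a ≤ d - c := by linarith
    _ ≤ maxgap S := gap_le_maxgap S _ hadj

lemma mingap_mul_le (S : Finset ℝ) (hS : S.Nonempty) :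
    mingap S * ((S.card - 1 : ℕ) : ℝ) ≤ S.max' hS - S.min' hS := by
  have h := List.card_nsmul_le_sum (gapList S) (mingap S) (mingap_le_gap S)
  rw [gapList_sum S hS, gapList_length] at h
  rw [mul_comm]
  simpa [nsmul_eq_mul] using h

lemma le_maxgap_mul (S : Finset ℝ) (hS : S.Nonempty) :
    S.max' hS - S.min' hS ≤ maxgap S * ((S.card - 1 : ℕ) : ℝ) := by
  have h := List.sum_le_card_nsmul (gapList S) (maxgap S) (gap_le_maxgap S)
  rw [gapList_sum S hS, gapList_length] at h
  rw [mul_comm]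
  simpa [nsmul_eq_mul] using h

end TimeSetAux

open scoped Classical in
/-- The relation `h_Θ ≤ T_Θ ≤ τ_Θ · h_Θ · #𝒯` between the size of the global time
set, the maximum of the elemental time sizes, and the asynchronicity ratio. -/
theorem time_set_size_inequalities
    {ι : Type*} [Fintype ι] [Nonempty ι]
    (t0 tf : ℝ) (h : t0 < tf) (Θ : ι → Finset ℝ)
    (hsub : ∀ K, (Θ K : Set ℝ) ⊆ Set.Icc t0 tf)
    (hmem : ∀ K, t0 ∈ Θ K ∧ tf ∈ Θ K)
    (hcard : ∀ K, 2 ≤ (Θ K).card) :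
    maxgap (Finset.univ.sup Θ) ≤
        Finset.univ.sup' Finset.univ_nonempty (fun K => maxgap (Θ K)) ∧
      Finset.univ.sup' Finset.univ_nonempty (fun K => maxgap (Θ K)) ≤
        (Finset.univ.sup' Finset.univ_nonempty (fun K => maxgap (Θ K)) /
            Finset.univ.inf' Finset.univ_nonempty (fun K => mingap (Θ K))) *
          maxgap (Finset.univ.sup Θ) * (Fintype.card ι) := by
  classical
  set ΘG := Finset.univ.sup Θ with hΘG
  have hmemG : ∀ x, x ∈ ΘG ↔ ∃ K, x ∈ Θ K := by
    intro x
    rw [hΘG, Finset.sup_eq_biUnion, Finset.mem_biUnion]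
    simp
  have hK_sub : ∀ K, Θ K ⊆ ΘG := fun K => fun x hx => (hmemG x).mpr ⟨K, hx⟩
  have K0 : ι := Classical.arbitrary ι
  have h0G : t0 ∈ ΘG := hK_sub K0 (hmem K0).1
  have hfG : tf ∈ ΘG := hK_sub K0 (hmem K0).2
  have hsubG : ∀ x ∈ ΘG, t0 ≤ x ∧ x ≤ tf := by
    intro x hx
    obtain ⟨K, hK⟩ := (hmemG x).mp hx
    exact ⟨(hsub K hK).1, (hsub K hK).2⟩
  have hGnonempty : ΘG.Nonempty := ⟨t0, h0G⟩
  have hGcard : 2 ≤ ΘG.card := by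
    have hpair : ({t0, tf} : Finset ℝ) ⊆ ΘG := by
      intro x hx
      rcases Finset.mem_insert.mp hx with rfl | hx
      · exact h0G
      · rw [Finset.mem_singleton] at hx; subst hx; exact hfG
    calc 2 = ({t0, tf} : Finset ℝ).card := (Finset.card_pair h.ne).symm
      _ ≤ ΘG.card := Finset.card_le_card hpair
  -- min' and max' of any admissible set
  have hmin : ∀ (S : Finset ℝ) (hS : S.Nonempty), t0 ∈ S → (∀ x ∈ S, t0 ≤ x ∧ x ≤ tf) →
      S.min' hS = t0 := fun S hS h0 hsb =>
    le_antisymm (Finset.min'_le _ _ h0) ((hsb _ (S.min'_mem hS)).1)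
  have hmax : ∀ (S : Finset ℝ) (hS : S.Nonempty), tf ∈ S → (∀ x ∈ S, t0 ≤ x ∧ x ≤ tf) →
      S.max' hS = tf := fun S hS hf hsb =>
    le_antisymm ((hsb _ (S.max'_mem hS)).2) (Finset.le_max' _ _ hf)
  have hsubK : ∀ K, ∀ x ∈ Θ K, t0 ≤ x ∧ x ≤ tf := by
    intro K x hx; exact ⟨(hsub K hx).1, (hsub K hx).2⟩
  set T := Finset.univ.sup' Finset.univ_nonempty (fun K => maxgap (Θ K)) with hT
  set m := Finset.univ.inf' Finset.univ_nonempty (fun K => mingap (Θ K)) with hm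
  -- Part 1
  have part1 : maxgap ΘG ≤ T := by
    calc maxgap ΘG ≤ maxgap (Θ K0) :=
          TimeSetAux.maxgap_le_of_subset (hK_sub K0) (hmem K0).1 (hmem K0).2 hsubG
      _ ≤ T := Finset.le_sup' (fun K => maxgap (Θ K)) (Finset.mem_univ K0)
  refine ⟨part1, ?_⟩
  -- Part 2
  have hm_pos : 0 < m := by
    obtain ⟨K1, _, hK1⟩ := Finset.exists_mem_eq_inf' Finset.univ_nonempty
      (fun K => mingap (Θ K))
    rw [hm, hK1]
    exact TimeSetAux.mingap_pos _ (hcard K1)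
  have hT_pos : 0 < T :=
    lt_of_lt_of_le (TimeSetAux.maxgap_pos _ (hcard K0))
      (Finset.le_sup' (fun K => maxgap (Θ K)) (Finset.mem_univ K0))
  have hG_pos : 0 < maxgap ΘG := TimeSetAux.maxgap_pos _ hGcard
  obtain ⟨Km, _, hKm⟩ := Finset.exists_mem_eq_sup' Finset.univ_nonempty
    (fun K => (Θ K).card)
  have hcardmax : ∀ K, (Θ K).card ≤ (Θ Km).card := fun K =>
    hKm ▸ Finset.le_sup' (fun K => (Θ K).card) (Finset.mem_univ K)
  -- cardinality bound
  have hcardbound : ΘG.card - 1 ≤ (Fintype.card ι) * ((Θ Km).card - 1) := by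
    have hsubE : ΘG.erase t0 ⊆ Finset.univ.biUnion (fun K => (Θ K).erase t0) := by
      intro x hx
      rw [Finset.mem_erase] at hx
      obtain ⟨K, hK⟩ := (hmemG x).mp hx.2
      exact Finset.mem_biUnion.mpr ⟨K, Finset.mem_univ K,
        Finset.mem_erase.mpr ⟨hx.1, hK⟩⟩
    calc ΘG.card - 1 = (ΘG.erase t0).card := (Finset.card_erase_of_mem h0G).symm
      _ ≤ ∑ K : ι, ((Θ K).erase t0).card :=
          le_trans (Finset.card_le_card hsubE) (Finset.card_biUnion_le)
      _ = ∑ K : ι, ((Θ K).card - 1) := by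
          apply Finset.sum_congr rfl
          intro K _
          exact Finset.card_erase_of_mem (hmem K).1
      _ ≤ (Fintype.card ι) * ((Θ Km).card - 1) := by
          rw [← Finset.card_univ, ← smul_eq_mul]
          exact Finset.sum_le_card_nsmul _ _ _ (fun K _ => by
            have := hcardmax K; omega)
  -- real-number chain
  have hmKm : m ≤ mingap (Θ Km) := Finset.inf'_le (fun K => mingap (Θ K)) (Finset.mem_univ Km)
  have h1 : mingap (Θ Km) * (((Θ Km).card - 1 : ℕ) : ℝ) ≤ tf - t0 := by
    have hne : (Θ Km).Nonempty := ⟨t0, (hmem Km).1⟩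
    have := TimeSetAux.mingap_mul_le (Θ Km) hne
    rwa [hmin _ hne (hmem Km).1 (hsubK Km), hmax _ hne (hmem Km).2 (hsubK Km)] at this
  have h2 : tf - t0 ≤ maxgap ΘG * ((ΘG.card - 1 : ℕ) : ℝ) := by
    have := TimeSetAux.le_maxgap_mul ΘG hGnonempty
    rwa [hmin _ hGnonempty h0G hsubG, hmax _ hGnonempty hfG hsubG] at this
  have hcK_pos : 1 ≤ (Θ Km).card - 1 := by have := hcard Km; omega
  have hcKR : (1 : ℝ) ≤ (((Θ Km).card - 1 : ℕ) : ℝ) := by exact_mod_cast hcK_pos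
  have hcast : ((ΘG.card - 1 : ℕ) : ℝ) ≤ (Fintype.card ι) * (((Θ Km).card - 1 : ℕ) : ℝ) := by
    exact_mod_cast hcardbound
  have hkey : m ≤ maxgap ΘG * (Fintype.card ι) := by
    have hchain : m * (((Θ Km).card - 1 : ℕ) : ℝ) ≤
        maxgap ΘG * (Fintype.card ι) * (((Θ Km).card - 1 : ℕ) : ℝ) := by
      calc m * (((Θ Km).card - 1 : ℕ) : ℝ)
          ≤ mingap (Θ Km) * (((Θ Km).card - 1 : ℕ) : ℝ) := by
            apply mul_le_mul_of_nonneg_right hmKm; positivity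
        _ ≤ tf - t0 := h1
        _ ≤ maxgap ΘG * ((ΘG.card - 1 : ℕ) : ℝ) := h2
        _ ≤ maxgap ΘG * ((Fintype.card ι) * (((Θ Km).card - 1 : ℕ) : ℝ)) :=
            mul_le_mul_of_nonneg_left hcast hG_pos.le
        _ = maxgap ΘG * (Fintype.card ι) * (((Θ Km).card - 1 : ℕ) : ℝ) := by ring
    exact le_of_mul_le_mul_right hchain (lt_of_lt_of_le zero_lt_one hcKR)
  calc T = (T / m) * m := (div_mul_cancel₀ T hm_pos.ne').symm
    _ ≤ (T / m) * (maxgap ΘG * (Fintype.card ι)) :=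
        mul_le_mul_of_nonneg_left hkey (div_nonneg hT_pos.le hm_pos.le)
    _ = (T / m) * maxgap ΘG * (Fintype.card ι) := by ring
end

section
/- Let I = (a, b) ⊆ ℝ be a bounded open interval, n ≥ 1, C ≥ 0, and let (ε_h) be a sequence of nonnegative reals with ε_h → 0. Let f_h : I → EuclideanSpace ℝ (Fin n) be functions satisfying ‖f_h(t₂) − f_h(t₁)‖ ≤ C·(t₂ − t₁ + ε_h) for all t₁ ≤ t₂ in I and all h, and suppose f_h(t) → f(t) for almost every t ∈ I (with respect to Lebesgue measure). Then there exists a function g : I → EuclideanSpace ℝ (Fin n) which is Lipschitz with constant C and equals f almost everywhere on I. -/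
open MeasureTheory Set Filter

/-- Coordinate bound in Euclidean space. -/
lemma euclid_abs_apply_le_norm {n : ℕ} (x : EuclideanSpace ℝ (Fin n)) (i : Fin n) :
    |x i| ≤ ‖x‖ := by
  rw [EuclideanSpace.norm_eq]
  have h1 : |x i| = Real.sqrt (‖x i‖ ^ 2) := by
    rw [Real.sqrt_sq_eq_abs, abs_norm, Real.norm_eq_abs]
  rw [h1]
  apply Real.sqrt_le_sqrt
  exact Finset.single_le_sum (fun j _ => sq_nonneg ‖x j‖) (Finset.mem_univ i)

set_option maxHeartbeats 1000000 in
/-- If a sequence of functions on a bounded interval satisfies a uniform almost-Lipschitz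
increment bound with vanishing defect and converges pointwise a.e., then the a.e. limit
coincides a.e. with a Lipschitz function. -/
theorem ae_limit_of_almost_lipschitz_is_lipschitz
    (a b : ℝ) (hab : a < b) (n : ℕ) (hn : 1 ≤ n)
    (C : ℝ) (hC : 0 ≤ C)
    (ε : ℕ → ℝ) (hε : ∀ h, 0 ≤ ε h)
    (hε0 : Filter.Tendsto ε Filter.atTop (nhds 0))
    (f : ℕ → ℝ → EuclideanSpace ℝ (Fin n))
    (flim : ℝ → EuclideanSpace ℝ (Fin n))
    (hinc : ∀ h, ∀ t₁ ∈ Set.Ioo a b, ∀ t₂ ∈ Set.Ioo a b, t₁ ≤ t₂ →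
      ‖f h t₂ - f h t₁‖ ≤ C * (t₂ - t₁ + ε h))
    (hconv : ∀ᵐ s ∂(MeasureTheory.volume.restrict (Set.Ioo a b)),
      Filter.Tendsto (fun h => f h s) Filter.atTop (nhds (flim s))) :
    ∃ g : ℝ → EuclideanSpace ℝ (Fin n),
      LipschitzOnWith (Real.toNNReal C) g (Set.Ioo a b) ∧
      ∀ᵐ s ∂(MeasureTheory.volume.restrict (Set.Ioo a b)), g s = flim s := by
  classical
  set T : Set ℝ := {s | Filter.Tendsto (fun h => f h s) Filter.atTop (nhds (flim s))} with hT
  set E : Set ℝ := T ∩ Set.Ioo a b with hEdef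
  -- the complement of T in Ioo is null
  have hnull : MeasureTheory.volume (Tᶜ ∩ Set.Ioo a b) = 0 := by
    have := hconv
    rw [MeasureTheory.ae_iff] at this
    rwa [MeasureTheory.Measure.restrict_apply' measurableSet_Ioo] at this
  -- key Lipschitz estimate for flim on E
  have key : ∀ t₁ ∈ E, ∀ t₂ ∈ E, ‖flim t₂ - flim t₁‖ ≤ C * |t₂ - t₁| := by
    have base : ∀ t₁ ∈ E, ∀ t₂ ∈ E, t₁ ≤ t₂ → ‖flim t₂ - flim t₁‖ ≤ C * (t₂ - t₁) := by
      intro t₁ ht₁ t₂ ht₂ hle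
      have h1 : Filter.Tendsto (fun h => ‖f h t₂ - f h t₁‖) Filter.atTop
          (nhds ‖flim t₂ - flim t₁‖) := (ht₂.1.sub ht₁.1).norm
      have h2 : Filter.Tendsto (fun h => C * (t₂ - t₁ + ε h)) Filter.atTop
          (nhds (C * (t₂ - t₁ + 0))) :=
        Filter.Tendsto.const_mul C (tendsto_const_nhds.add hε0)
      rw [add_zero] at h2
      exact le_of_tendsto_of_tendsto' h1 h2 (fun h => hinc h t₁ ht₁.2 t₂ ht₂.2 hle)
    intro t₁ ht₁ t₂ ht₂
    rcases le_total t₁ t₂ with hle | hle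
    · rw [abs_of_nonneg (by linarith)]; exact base t₁ ht₁ t₂ ht₂ hle
    · rw [abs_of_nonpos (by linarith)]
      calc ‖flim t₂ - flim t₁‖ = ‖flim t₁ - flim t₂‖ := by rw [norm_sub_rev]
        _ ≤ C * (t₁ - t₂) := base t₂ ht₂ t₁ ht₁ hle
        _ = C * -(t₂ - t₁) := by ring
  -- each coordinate is Lipschitz on E, extend it
  have coordLip : ∀ i : Fin n, LipschitzOnWith (Real.toNNReal C)
      (fun t => flim t i) E := by
    intro i
    apply LipschitzOnWith.of_dist_le_mul
    intro x hx y hy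
    have h1 : dist (flim x i) (flim y i) ≤ ‖flim x - flim y‖ := by
      rw [Real.dist_eq]
      have := euclid_abs_apply_le_norm (flim x - flim y) i
      simpa using this
    calc dist (flim x i) (flim y i) ≤ ‖flim x - flim y‖ := h1
      _ ≤ C * |x - y| := key y hy x hx
      _ = (Real.toNNReal C : ℝ) * dist x y := by
          rw [Real.coe_toNNReal C hC, Real.dist_eq]
  choose G hGlip hGeq using fun i => (coordLip i).extend_real
  set g : ℝ → EuclideanSpace ℝ (Fin n) := fun t => WithLp.toLp 2 (fun i => G i t : Fin n → ℝ) with hg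
  -- g is continuous
  have hgcont : Continuous g := by
    have h1 : Continuous (fun t => (fun i => G i t : Fin n → ℝ)) :=
      continuous_pi (fun i => (hGlip i).continuous)
    exact (PiLp.continuous_toLp 2 (fun _ : Fin n => ℝ)).comp h1
  -- g agrees with flim on E
  have hgeq : ∀ s ∈ E, g s = flim s := by
    intro s hs
    ext i
    exact ((hGeq i) hs).symm
  -- E is dense in Ioo a b
  have hdense : Set.Ioo a b ⊆ closure E := by
    intro x hx
    rw [Metric.mem_closure_iff]
    intro δ hδ
    by_contra hcon
    push_neg at hcon
    set l := max a (x - δ) with hl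
    set r := min b (x + δ) with hr
    have hlx : l < x := max_lt hx.1 (by linarith)
    have hxr : x < r := lt_min hx.2 (by linarith)
    have hJsub : Set.Ioo l r ⊆ Tᶜ ∩ Set.Ioo a b := by
      intro y hy
      have hyIoo : y ∈ Set.Ioo a b :=
        ⟨lt_of_le_of_lt (le_max_left _ _) hy.1, lt_of_lt_of_le hy.2 (min_le_left _ _)⟩
      have hy1 : x - δ < y := lt_of_le_of_lt (le_max_right a (x - δ)) hy.1
      have hy2 : y < x + δ := lt_of_lt_of_le hy.2 (min_le_right b (x + δ))
      have hdist : dist x y < δ := by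
        rw [Real.dist_eq, abs_lt]
        constructor <;> linarith
      exact ⟨fun hyT => absurd (hcon y ⟨hyT, hyIoo⟩) (not_le.mpr hdist), hyIoo⟩
    have h0 : MeasureTheory.volume (Set.Ioo l r) = 0 :=
      measure_mono_null hJsub hnull
    rw [Real.volume_Ioo] at h0
    have : (0 : ℝ) < r - l := by linarith
    simp [ENNReal.ofReal_eq_zero, not_lt.mpr this.le] at h0
    linarith
  refine ⟨g, ?_, ?_⟩
  · -- Lipschitz on Ioo via closedness
    apply LipschitzOnWith.of_dist_le_mul
    intro x hx y hy
    have hclosed : IsClosed {p : ℝ × ℝ |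
        dist (g p.1) (g p.2) ≤ (Real.toNNReal C : ℝ) * dist p.1 p.2} := by
      apply isClosed_le
      · exact (hgcont.comp continuous_fst).dist (hgcont.comp continuous_snd)
      · exact continuous_const.mul (continuous_fst.dist continuous_snd)
    have hsubset : E ×ˢ E ⊆ {p : ℝ × ℝ |
        dist (g p.1) (g p.2) ≤ (Real.toNNReal C : ℝ) * dist p.1 p.2} := by
      rintro ⟨u, v⟩ ⟨hu, hv⟩
      simp only [Set.mem_setOf_eq]
      rw [hgeq u hu, hgeq v hv, Real.coe_toNNReal C hC, dist_eq_norm, Real.dist_eq]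
      exact key v hv u hu
    have hcl : closure (E ×ˢ E) ⊆ {p : ℝ × ℝ |
        dist (g p.1) (g p.2) ≤ (Real.toNNReal C : ℝ) * dist p.1 p.2} :=
      hclosed.closure_subset_iff.mpr hsubset
    have : (x, y) ∈ closure (E ×ˢ E) := by
      rw [closure_prod_eq]
      exact Set.mem_prod.mpr ⟨hdense hx, hdense hy⟩
    have h2 := hcl this
    simpa using h2
  · -- a.e. equality
    have hmem : ∀ᵐ s ∂(MeasureTheory.volume.restrict (Set.Ioo a b)), s ∈ Set.Ioo a b :=
      MeasureTheory.ae_restrict_mem measurableSet_Ioo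
    filter_upwards [hconv, hmem] with s hsT hsI
    exact hgeq s ⟨hsT, hsI⟩
end
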